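/- For every integer l ≥ 1, the 2-adic valuation of ∏_{i=1}^{l} (9^l − 9^{i−1}) equals 4l − α(l); that is, ∏_{i=1}^{l} (9^l − 9^{i−1}) = 2^(4l−α(l))·(2s+1) for some natural number s. -/

import Mathlib

lemma pow81_mod (j : ℕ) : ∃ t, (81:ℕ) ^ j = 16 * t + 1 := by
  induction j with
  | zero => exact ⟨0, by norm_num⟩
  | succ n ihn =>
    obtain ⟨t, ht⟩ := ihn
    exact ⟨81 * t + 5, by rw [pow_succ, ht]; ring⟩

lemma v2_nine_pow_sub_one : ∀ k : ℕ, k ≠ 0 →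
    padicValNat 2 (9 ^ k - 1) = 3 + padicValNat 2 k := by
  intro k
  induction k using Nat.strong_induction_on with
  | _ k ih =>
    intro hk
    rcases Nat.even_or_odd k with he | ho
    · have h := padicValNat.pow_two_sub_pow (x := 9) (y := 1) (by norm_num) (by norm_num)
        (by norm_num) hk he
      simp only [one_pow] at h
      norm_num at h
      have h10 : padicValNat 2 10 = 1 := by
        have e : (10:ℕ) = 2 * 5 := by norm_num
        rw [e, padicValNat.mul (by norm_num) (by norm_num)]
        simp [padicValNat.self, padicValNat.eq_zero_of_not_dvd (by norm_num : ¬ (2:ℕ) ∣ 5)]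
      have h8 : padicValNat 2 8 = 3 := by
        have e : (8:ℕ) = 2 ^ 3 := by norm_num
        rw [e, padicValNat.prime_pow]
      omega
    · obtain ⟨j, rfl⟩ := ho
      have hvk : padicValNat 2 (2 * j + 1) = 0 :=
        padicValNat.eq_zero_of_not_dvd (by omega)
      obtain ⟨t, ht⟩ := pow81_mod j
      have key : (9:ℕ) ^ (2 * j + 1) - 1 = 2 ^ 3 * (18 * t + 1) := by
        have e : (9:ℕ) ^ (2 * j + 1) = 9 * 81 ^ j := by
          rw [pow_succ, pow_mul]; norm_num; ring
        rw [e, ht]; ring_nf; omega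
      rw [key, padicValNat.mul (by positivity) (by positivity),
        padicValNat.prime_pow, hvk, padicValNat.eq_zero_of_not_dvd (by omega)]

lemma padicValNat_prod (s : Finset ℕ) (f : ℕ → ℕ) (hf : ∀ i ∈ s, f i ≠ 0) :
    padicValNat 2 (∏ i ∈ s, f i) = ∑ i ∈ s, padicValNat 2 (f i) := by
  induction s using Finset.cons_induction with
  | empty => simp
  | cons a s ha ih =>
    rw [Finset.prod_cons, Finset.sum_cons,
      padicValNat.mul (hf a (Finset.mem_cons_self a s))
        (Finset.prod_ne_zero_iff.mpr fun i hi => hf i (Finset.mem_cons_of_mem hi)),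
      ih (fun i hi => hf i (Finset.mem_cons_of_mem hi))]

lemma sum_v2_eq_factorial (l : ℕ) :
    ∑ k ∈ Finset.Icc 1 l, padicValNat 2 k = padicValNat 2 (Nat.factorial l) := by
  induction l with
  | zero => simp
  | succ n ih =>
    rw [Finset.sum_Icc_succ_top (by omega), ih, Nat.factorial_succ,
      padicValNat.mul (by omega) (Nat.factorial_ne_zero n)]
    ring

theorem prod_nine_pow_sub_valuation (l : ℕ) (hl : 1 ≤ l) :
    ∃ s : ℕ, ∏ i ∈ Finset.Icc 1 l, (9 ^ l - 9 ^ (i - 1)) =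
      2 ^ (4 * l - (Nat.digits 2 l).sum) * (2 * s + 1) := by
  set P := ∏ i ∈ Finset.Icc 1 l, (9 ^ l - 9 ^ (i - 1)) with hP
  have hfac : ∀ i ∈ Finset.Icc 1 l, (9:ℕ) ^ l - 9 ^ (i - 1) ≠ 0 := by
    intro i hi
    simp only [Finset.mem_Icc] at hi
    have : (9:ℕ) ^ (i-1) < 9 ^ l := Nat.pow_lt_pow_right (by norm_num) (by omega)
    omega
  have hP0 : P ≠ 0 := Finset.prod_ne_zero_iff.mpr hfac
  have hvfac : ∀ i ∈ Finset.Icc 1 l,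
      padicValNat 2 (9 ^ l - 9 ^ (i - 1)) = 3 + padicValNat 2 (l - (i - 1)) := by
    intro i hi
    simp only [Finset.mem_Icc] at hi
    have key : (9:ℕ) ^ l - 9 ^ (i - 1) = 9 ^ (i-1) * (9 ^ (l - (i-1)) - 1) := by
      rw [Nat.mul_sub, mul_one, ← pow_add]
      congr 2
      omega
    rw [key, padicValNat.mul (by positivity)
      (by have : (1:ℕ) < 9 ^ (l - (i-1)) := Nat.one_lt_pow (by omega) (by norm_num); omega),
      v2_nine_pow_sub_one _ (by omega),
      padicValNat.eq_zero_of_not_dvd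
        (fun h => by have := Nat.Prime.dvd_of_dvd_pow Nat.prime_two h; omega)]
    omega
  -- valuation of the product
  have hreindex : ∑ i ∈ Finset.Icc 1 l, padicValNat 2 (l - (i - 1)) =
      ∑ k ∈ Finset.Icc 1 l, padicValNat 2 k := by
    apply Finset.sum_nbij' (fun i => l + 1 - i) (fun k => l + 1 - k) <;>
      simp only [Finset.mem_Icc] <;> intros <;> first | omega | (congr 1; omega)
  have hvP : padicValNat 2 P = 4 * l - (Nat.digits 2 l).sum := by
    rw [hP, padicValNat_prod _ _ hfac, Finset.sum_congr rfl hvfac, Finset.sum_add_distrib,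
      Finset.sum_const, Nat.card_Icc, hreindex, sum_v2_eq_factorial]
    have legendre := sub_one_mul_padicValNat_factorial (p := 2) (hp := ⟨Nat.prime_two⟩) l
    have hdig : (Nat.digits 2 l).sum ≤ l := Nat.digit_sum_le 2 l
    simp only [Nat.add_sub_cancel, smul_eq_mul] at *
    omega
  -- extract the odd parts
  have hfact : P.factorization 2 = 4 * l - (Nat.digits 2 l).sum := by
    rw [Nat.factorization_def P Nat.prime_two, hvP]
  have hself := Nat.ordProj_mul_ordCompl_eq_self P 2
  have hodd : ¬ 2 ∣ (P / 2 ^ P.factorization 2) := Nat.not_dvd_ordCompl Nat.prime_two hP0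
  refine ⟨(P / 2 ^ P.factorization 2) / 2, ?_⟩
  have hm : 2 * (P / 2 ^ P.factorization 2 / 2) + 1 = P / 2 ^ P.factorization 2 := by omega
  rw [← hfact, hm]
  exact hself.symm
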